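/- If for every i = 1, ..., n it holds that max_{k ≠ i} μ(W^i, X^k) < r_i, then for every data point x_j the representation produced by OMP(X_{-j}, x_j) with ε = 0 and k_max = N − 1 is subspace preserving. -/

import Mathlib

open scoped RealInnerProductSpace Classical

noncomputable section

namespace SSCOMP

variable {D : ℕ}

noncomputable def ompSelect {ι : Type*} [Fintype ι] [LinearOrder ι] [Nonempty ι]
    (a : ι → EuclideanSpace ℝ (Fin D)) (q : EuclideanSpace ℝ (Fin D)) : ι :=
  (Finset.univ.filter fun i => ∀ m, |⟪a m, q⟫| ≤ |⟪a i, q⟫|).min' (by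
    obtain ⟨i, -, hi⟩ := Finset.exists_max_image (Finset.univ : Finset ι)
      (fun m => |⟪a m, q⟫|) Finset.univ_nonempty
    exact ⟨i, Finset.mem_filter.mpr ⟨Finset.mem_univ i, fun m => hi m (Finset.mem_univ m)⟩⟩)

noncomputable def ompState {ι : Type*} [Fintype ι] [LinearOrder ι]
    (a : ι → EuclideanSpace ℝ (Fin D)) (b : EuclideanSpace ℝ (Fin D)) :
    ℕ → Finset ι × EuclideanSpace ℝ (Fin D)
  | 0 => (∅, b)
  | k + 1 =>
    let s := ompState a b k
    if s.2 = 0 then s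
    else if h : Nonempty ι then
      haveI := h
      let T' : Finset ι := insert (ompSelect a s.2) s.1
      (T', b - (Submodule.orthogonalProjection (Submodule.span ℝ (a '' (T' : Set ι))) b :
        EuclideanSpace ℝ (Fin D)))
    else s

noncomputable def ompSupport {ι : Type*} [Fintype ι] [LinearOrder ι]
    (a : ι → EuclideanSpace ℝ (Fin D)) (b : EuclideanSpace ℝ (Fin D)) (k : ℕ) : Finset ι :=
  (ompState a b k).1

noncomputable def ompResidual {ι : Type*} [Fintype ι] [LinearOrder ι]
    (a : ι → EuclideanSpace ℝ (Fin D)) (b : EuclideanSpace ℝ (Fin D)) (k : ℕ) :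
    EuclideanSpace ℝ (Fin D) :=
  (ompState a b k).2

def IsOMPOutput {ι : Type*} [Fintype ι] [LinearOrder ι]
    (a : ι → EuclideanSpace ℝ (Fin D)) (b : EuclideanSpace ℝ (Fin D)) (kmax : ℕ)
    (c : ι → ℝ) : Prop :=
  (∀ m, c m ≠ 0 → m ∈ ompSupport a b kmax) ∧
  ∀ c' : ι → ℝ, (∀ m, c' m ≠ 0 → m ∈ ompSupport a b kmax) →
    ‖b - ∑ m, c m • a m‖ ≤ ‖b - ∑ m, c' m • a m‖

/-- Set of normalized nonzero residual directions of OMP(a, b) run with `ε = 0`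
and `k_max` large enough. -/
noncomputable def residualDirs {ι : Type*} [Fintype ι] [LinearOrder ι]
    (a : ι → EuclideanSpace ℝ (Fin D)) (b : EuclideanSpace ℝ (Fin D)) :
    Set (EuclideanSpace ℝ (Fin D)) :=
  {w | ∃ k, ompResidual a b k ≠ 0 ∧ w = ‖ompResidual a b k‖⁻¹ • ompResidual a b k}

/-- Coherence between two sets of unit-norm points. -/
noncomputable def coherence (A B : Set (EuclideanSpace ℝ (Fin D))) : ℝ :=
  sSup {r : ℝ | ∃ u ∈ A, ∃ v ∈ B, r = |⟪u, v⟫|}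

/-- Symmetrized convex hull `conv(±A)`. -/
noncomputable def symmHull (A : Set (EuclideanSpace ℝ (Fin D))) :
    Set (EuclideanSpace ℝ (Fin D)) :=
  convexHull ℝ (A ∪ (-A))

/-- Inradius of a convex body: the radius of the largest Euclidean ball
(within the linear span of the body) inscribed in it. -/
noncomputable def inradius (P : Set (EuclideanSpace ℝ (Fin D))) : ℝ :=
  sSup {r : ℝ | 0 ≤ r ∧ ∃ c ∈ Submodule.span ℝ P,
    ∀ y ∈ Submodule.span ℝ P, ‖y - c‖ ≤ r → y ∈ P}

variable {n N : ℕ}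

/-- `X^i`: the set of data points lying in the `i`-th subspace. -/
noncomputable def subX (S : Fin n → Submodule ℝ (EuclideanSpace ℝ (Fin D)))
    (x : Fin N → EuclideanSpace ℝ (Fin D)) (i : Fin n) : Set (EuclideanSpace ℝ (Fin D)) :=
  x '' {m | x m ∈ S i}

/-- `X^i_{-j}`: the set of data points lying in the `i`-th subspace, with `x j` removed. -/
noncomputable def subXmin (S : Fin n → Submodule ℝ (EuclideanSpace ℝ (Fin D)))
    (x : Fin N → EuclideanSpace ℝ (Fin D)) (i : Fin n) (j : Fin N) :
    Set (EuclideanSpace ℝ (Fin D)) :=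
  x '' {m | x m ∈ S i ∧ m ≠ j}

/-- `W_j^i`: the set of OMP residual directions associated with `X^i_{-j}` and `x j`. -/
noncomputable def Wji (S : Fin n → Submodule ℝ (EuclideanSpace ℝ (Fin D)))
    (x : Fin N → EuclideanSpace ℝ (Fin D)) (i : Fin n) (j : Fin N) :
    Set (EuclideanSpace ℝ (Fin D)) :=
  residualDirs (fun m : {m : Fin N // x m ∈ S i ∧ m ≠ j} => x m.1) (x j)

/-- `W^i`: the set of OMP residual directions associated with `X^i`. -/
noncomputable def Wfull (S : Fin n → Submodule ℝ (EuclideanSpace ℝ (Fin D)))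
    (x : Fin N → EuclideanSpace ℝ (Fin D)) (i : Fin n) : Set (EuclideanSpace ℝ (Fin D)) :=
  ⋃ j ∈ {j : Fin N | x j ∈ S i}, Wji S x i j

/-- `r_i := min_{j : x_j ∈ S_i} r(P^i_{-j})`. -/
noncomputable def rMin (S : Fin n → Submodule ℝ (EuclideanSpace ℝ (Fin D)))
    (x : Fin N → EuclideanSpace ℝ (Fin D)) (i : Fin n) : ℝ :=
  sInf {r : ℝ | ∃ j, x j ∈ S i ∧ r = inradius (symmHull (subXmin S x i j))}

/-- Cosine of the principal angle between two subspaces. -/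
noncomputable def cosAngle (Si Sk : Submodule ℝ (EuclideanSpace ℝ (Fin D))) : ℝ :=
  sSup {r : ℝ | ∃ u ∈ Si, ∃ v ∈ Sk, ‖u‖ = 1 ∧ ‖v‖ = 1 ∧ r = ⟪u, v⟫}


/-! ### Auxiliary lemmas -/

lemma span_symmHull (A : Set (EuclideanSpace ℝ (Fin D))) :
    Submodule.span ℝ (symmHull A) = Submodule.span ℝ A := by
  apply le_antisymm
  · rw [Submodule.span_le]
    apply convexHull_min
    · rintro y (hy | hy)
      · exact Submodule.subset_span hy
      · rw [Set.mem_neg] at hy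
        simpa using (Submodule.span ℝ A).neg_mem (Submodule.subset_span hy)
    · exact (Submodule.span ℝ A).convex
  · exact Submodule.span_mono (Set.subset_union_left.trans (subset_convexHull ℝ _))

lemma neg_mem_symmHull {A : Set (EuclideanSpace ℝ (Fin D))} {p : EuclideanSpace ℝ (Fin D)}
    (hp : p ∈ symmHull A) : -p ∈ symmHull A := by
  have h1 : -(A ∪ -A) = A ∪ -A := by
    ext y; simp [Set.mem_neg, or_comm]
  have h2 : symmHull A = -symmHull A := by
    unfold symmHull
    rw [← convexHull_neg, h1]
  rw [h2]
  exact Set.neg_mem_neg.mpr hp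

/-- The key duality between the inradius of the symmetrized hull and the maximal
inner product with the generating points. -/
lemma inradius_mul_norm_le {n N : ℕ} (S : Fin n → Submodule ℝ (EuclideanSpace ℝ (Fin D)))
    (x : Fin N → EuclideanSpace ℝ (Fin D)) (i : Fin n) (j : Fin N)
    (hspan : Submodule.span ℝ (subXmin S x i j) = S i)
    {q : EuclideanSpace ℝ (Fin D)} (hq : q ∈ S i) (hq0 : q ≠ 0)
    {M : ℝ} (hM0 : 0 ≤ M)
    (hM : ∀ m : Fin N, x m ∈ S i → m ≠ j → |⟪x m, q⟫| ≤ M) :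
    inradius (symmHull (subXmin S x i j)) * ‖q‖ ≤ M := by
  set A := subXmin S x i j with hA
  have hqpos : (0:ℝ) < ‖q‖ := norm_pos_iff.mpr hq0
  have hlin : IsLinearMap ℝ (fun y : EuclideanSpace ℝ (Fin D) => (⟪q, y⟫ : ℝ)) :=
    ⟨fun a b => inner_add_right q a b, fun c a => by
      rw [real_inner_smul_right]; simp [smul_eq_mul]⟩
  have hhalf : Convex ℝ {y : EuclideanSpace ℝ (Fin D) | (⟪q, y⟫ : ℝ) ≤ M} :=
    convex_halfSpace_le hlin M
  have hhull : ∀ p ∈ symmHull A, (⟪q, p⟫ : ℝ) ≤ M := by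
    intro p hp
    refine convexHull_min ?_ hhalf hp
    rintro y (⟨m, hm, rfl⟩ | hy)
    · calc (⟪q, x m⟫ : ℝ) ≤ |⟪q, x m⟫| := le_abs_self _
        _ = |⟪x m, q⟫| := by rw [real_inner_comm]
        _ ≤ M := hM m hm.1 hm.2
    · rw [Set.mem_neg] at hy
      obtain ⟨m, hm, hme⟩ := hy
      have hy' : y = -(x m) := by rw [hme]; simp
      rw [hy']
      show (⟪q, -(x m)⟫ : ℝ) ≤ M
      rw [inner_neg_right]
      calc -(⟪q, x m⟫ : ℝ) ≤ |⟪q, x m⟫| := neg_le_abs _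
        _ = |⟪x m, q⟫| := by rw [real_inner_comm]
        _ ≤ M := hM m hm.1 hm.2
  have hspan2 : Submodule.span ℝ (symmHull A) = S i := by
    rw [span_symmHull]; exact hspan
  rw [← le_div_iff₀ hqpos]
  apply Real.sSup_le
  · rintro r ⟨hr0, c, hc, hball⟩
    set u : EuclideanSpace ℝ (Fin D) := ‖q‖⁻¹ • q with hu
    have hun : ‖u‖ = 1 := by
      rw [hu, norm_smul, norm_inv, norm_norm, inv_mul_cancel₀ hqpos.ne']
    have huS : u ∈ Submodule.span ℝ (symmHull A) := by
      rw [hspan2]; exact (S i).smul_mem _ hq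
    have h1 : c + r • u ∈ symmHull A := by
      apply hball _ (Submodule.add_mem _ hc (Submodule.smul_mem _ _ huS))
      rw [add_sub_cancel_left, norm_smul, hun, mul_one]
      simp [abs_of_nonneg hr0]
    have h2 : c - r • u ∈ symmHull A := by
      apply hball _ (Submodule.sub_mem _ hc (Submodule.smul_mem _ _ huS))
      have he : c - r • u - c = -(r • u) := by abel
      rw [he, norm_neg, norm_smul, hun, mul_one]
      simp [abs_of_nonneg hr0]
    have h3 : -(c - r • u) ∈ symmHull A := neg_mem_symmHull h2
    have h4 : r • u ∈ symmHull A := by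
      have hconv : Convex ℝ (symmHull A) := convex_convexHull ℝ _
      have h5 := hconv h1 h3 (by norm_num : (0:ℝ) ≤ 1/2) (by norm_num : (0:ℝ) ≤ 1/2)
        (by norm_num : (1/2 : ℝ) + 1/2 = 1)
      have heq : (1/2 : ℝ) • (c + r • u) + (1/2 : ℝ) • (-(c - r • u)) = r • u := by
        module
      rwa [heq] at h5
    have h5 : (⟪q, r • u⟫ : ℝ) ≤ M := hhull _ h4
    have h6 : (⟪q, r • u⟫ : ℝ) = r * ‖q‖ := by
      rw [hu, real_inner_smul_right, real_inner_smul_right,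
        real_inner_self_eq_norm_mul_norm]
      field_simp
    rw [h6] at h5
    rw [le_div_iff₀ hqpos]
    exact h5
  · positivity

lemma inradius_nonneg (P : Set (EuclideanSpace ℝ (Fin D))) : 0 ≤ inradius P :=
  Real.sSup_nonneg fun _ hr => hr.1

lemma rMin_le_inradius {n N : ℕ} (S : Fin n → Submodule ℝ (EuclideanSpace ℝ (Fin D)))
    (x : Fin N → EuclideanSpace ℝ (Fin D)) (i : Fin n) (j : Fin N) (hij : x j ∈ S i) :
    rMin S x i ≤ inradius (symmHull (subXmin S x i j)) := by
  apply csInf_le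
  · refine ⟨0, ?_⟩
    rintro r ⟨j', _, rfl⟩
    exact inradius_nonneg _
  · exact ⟨j, hij, rfl⟩

lemma wfull_norm_one {n N : ℕ} (S : Fin n → Submodule ℝ (EuclideanSpace ℝ (Fin D)))
    (x : Fin N → EuclideanSpace ℝ (Fin D)) (i : Fin n)
    {w : EuclideanSpace ℝ (Fin D)} (hw : w ∈ Wfull S x i) : ‖w‖ = 1 := by
  simp only [Wfull, Set.mem_iUnion] at hw
  obtain ⟨j', _, hw⟩ := hw
  obtain ⟨kk, hkne, rfl⟩ := hw
  rw [norm_smul, norm_inv, norm_norm, inv_mul_cancel₀ (norm_ne_zero_iff.mpr hkne)]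

lemma abs_inner_le_coherence_sup {n N : ℕ} (S : Fin n → Submodule ℝ (EuclideanSpace ℝ (Fin D)))
    (x : Fin N → EuclideanSpace ℝ (Fin D)) (i : Fin n)
    (hunit : ∀ j, ‖x j‖ = 1)
    {w : EuclideanSpace ℝ (Fin D)} (hw : w ∈ Wfull S x i)
    {m : Fin N} {k : Fin n} (hk : k ≠ i) (hmk : x m ∈ S k) :
    |⟪w, x m⟫| ≤ sSup {r : ℝ | ∃ k, k ≠ i ∧ r = coherence (Wfull S x i) (subX S x k)} := by
  have step1 : |⟪w, x m⟫| ≤ coherence (Wfull S x i) (subX S x k) := by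
    apply le_csSup
    · refine ⟨1, ?_⟩
      rintro r ⟨u, hu, v, ⟨mv, _, rfl⟩, rfl⟩
      calc |⟪u, x mv⟫| ≤ ‖u‖ * ‖x mv‖ := abs_real_inner_le_norm _ _
        _ = 1 := by rw [wfull_norm_one S x i hu, hunit mv, mul_one]
    · exact ⟨w, hw, x m, ⟨m, hmk, rfl⟩, rfl⟩
  refine step1.trans (le_csSup ?_ ⟨k, hk, rfl⟩)
  have hsub : {r : ℝ | ∃ k, k ≠ i ∧ r = coherence (Wfull S x i) (subX S x k)} ⊆
      Set.range (fun k : Fin n => coherence (Wfull S x i) (subX S x k)) := by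
    rintro r ⟨k', _, rfl⟩; exact ⟨k', rfl⟩
  exact ((Set.finite_range _).subset hsub).bddAbove

lemma ompSelect_max {ι : Type*} [Fintype ι] [LinearOrder ι] [Nonempty ι]
    (a : ι → EuclideanSpace ℝ (Fin D)) (q : EuclideanSpace ℝ (Fin D)) :
    ∀ m, |⟪a m, q⟫| ≤ |⟪a (ompSelect a q), q⟫| := by
  unfold ompSelect
  intro m
  exact (Finset.mem_filter.mp (Finset.min'_mem
    (Finset.univ.filter fun i => ∀ m, |⟪a m, q⟫| ≤ |⟪a i, q⟫|) (by
      obtain ⟨i, -, hi⟩ := Finset.exists_max_image (Finset.univ : Finset ι)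
        (fun m => |⟪a m, q⟫|) Finset.univ_nonempty
      exact ⟨i, Finset.mem_filter.mpr ⟨Finset.mem_univ i, fun m => hi m (Finset.mem_univ m)⟩⟩))).2 m

lemma ompSelect_le_of {ι : Type*} [Fintype ι] [LinearOrder ι] [Nonempty ι]
    (a : ι → EuclideanSpace ℝ (Fin D)) (q : EuclideanSpace ℝ (Fin D)) (y : ι)
    (hy : ∀ m, |⟪a m, q⟫| ≤ |⟪a y, q⟫|) : ompSelect a q ≤ y := by
  unfold ompSelect
  exact Finset.min'_le _ _ (Finset.mem_filter.mpr ⟨Finset.mem_univ _, hy⟩)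

lemma nonempty_restricted {n N : ℕ} (S : Fin n → Submodule ℝ (EuclideanSpace ℝ (Fin D)))
    (x : Fin N → EuclideanSpace ℝ (Fin D)) (i : Fin n) (j : Fin N)
    (hunit : ∀ j, ‖x j‖ = 1)
    (hspan : Submodule.span ℝ (subXmin S x i j) = S i) (hij : x j ∈ S i) :
    Nonempty {m : Fin N // x m ∈ S i ∧ m ≠ j} := by
  by_contra h
  have hempty : {m : Fin N | x m ∈ S i ∧ m ≠ j} = ∅ := by
    ext m
    simp only [Set.mem_empty_iff_false, iff_false, Set.mem_setOf_eq]
    exact fun hm => h ⟨⟨m, hm⟩⟩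
  have h1 : subXmin S x i j = ∅ := by rw [subXmin, hempty, Set.image_empty]
  have h2 : S i = ⊥ := by rw [← hspan, h1, Submodule.span_empty]
  have h3 : x j = 0 := by rw [h2, Submodule.mem_bot] at hij; exact hij
  have := hunit j
  rw [h3, norm_zero] at this
  exact one_ne_zero this.symm

lemma select_eq {n N : ℕ} (S : Fin n → Submodule ℝ (EuclideanSpace ℝ (Fin D)))
    (x : Fin N → EuclideanSpace ℝ (Fin D)) (i : Fin n) (j : Fin N)
    (hunit : ∀ j, ‖x j‖ = 1) (hmem : ∀ j, ∃ i, x j ∈ S i)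
    (hspan : Submodule.span ℝ (subXmin S x i j) = S i)
    (hij : x j ∈ S i)
    (hcond : sSup {r : ℝ | ∃ k, k ≠ i ∧ r = coherence (Wfull S x i) (subX S x k)}
      < rMin S x i)
    [hNR : Nonempty {m : Fin N // x m ∈ S i ∧ m ≠ j}]
    [hNF : Nonempty {m : Fin N // m ≠ j}]
    {q : EuclideanSpace ℝ (Fin D)} (hq : q ∈ S i) (hq0 : q ≠ 0)
    (hw : ‖q‖⁻¹ • q ∈ Wfull S x i) :
    ompSelect (fun m : {m : Fin N // m ≠ j} => x m.1) q
      = ⟨(ompSelect (fun m : {m : Fin N // x m ∈ S i ∧ m ≠ j} => x m.1) q).1,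
         (ompSelect (fun m : {m : Fin N // x m ∈ S i ∧ m ≠ j} => x m.1) q).2.2⟩ := by
  have hqpos : (0:ℝ) < ‖q‖ := norm_pos_iff.mpr hq0
  obtain ⟨m0, -, hm0⟩ := Finset.exists_max_image
    (Finset.univ : Finset {m : Fin N // x m ∈ S i ∧ m ≠ j})
    (fun m => |⟪x m.1, q⟫|) Finset.univ_nonempty
  have hMle : ∀ m : {m : Fin N // x m ∈ S i ∧ m ≠ j},
      |⟪x m.1, q⟫| ≤ |⟪x m0.1, q⟫| := fun m => hm0 m (Finset.mem_univ m)
  have hM0 : (0:ℝ) ≤ |⟪x m0.1, q⟫| := abs_nonneg _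
  have hcross : ∀ m : Fin N, x m ∉ S i → |⟪x m, q⟫| < |⟪x m0.1, q⟫| := by
    intro m hm
    obtain ⟨k, hk⟩ := hmem m
    have hkne : k ≠ i := fun h => hm (h ▸ hk)
    have h1 : |⟪‖q‖⁻¹ • q, x m⟫| ≤
        sSup {r : ℝ | ∃ k, k ≠ i ∧ r = coherence (Wfull S x i) (subX S x k)} :=
      abs_inner_le_coherence_sup S x i hunit hw hkne hk
    have h2 : |⟪x m, q⟫| = ‖q‖ * |⟪‖q‖⁻¹ • q, x m⟫| := by
      rw [real_inner_smul_left, abs_mul, abs_inv, abs_norm, real_inner_comm]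
      field_simp
    have h3 : inradius (symmHull (subXmin S x i j)) * ‖q‖ ≤ |⟪x m0.1, q⟫| :=
      inradius_mul_norm_le S x i j hspan hq hq0 hM0 (fun m hm1 hm2 => hMle ⟨m, hm1, hm2⟩)
    have h4 : rMin S x i ≤ inradius (symmHull (subXmin S x i j)) :=
      rMin_le_inradius S x i j hij
    calc |⟪x m, q⟫| = ‖q‖ * |⟪‖q‖⁻¹ • q, x m⟫| := h2
      _ ≤ ‖q‖ * sSup {r : ℝ | ∃ k, k ≠ i ∧ r = coherence (Wfull S x i) (subX S x k)} :=
          mul_le_mul_of_nonneg_left h1 hqpos.le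
      _ < ‖q‖ * rMin S x i := mul_lt_mul_of_pos_left hcond hqpos
      _ ≤ ‖q‖ * inradius (symmHull (subXmin S x i j)) :=
          mul_le_mul_of_nonneg_left h4 hqpos.le
      _ = inradius (symmHull (subXmin S x i j)) * ‖q‖ := mul_comm _ _
      _ ≤ |⟪x m0.1, q⟫| := h3
  set selF := ompSelect (fun m : {m : Fin N // m ≠ j} => x m.1) q with hselF
  set selR := ompSelect (fun m : {m : Fin N // x m ∈ S i ∧ m ≠ j} => x m.1) q with hselR
  have hmaxF : ∀ m : {m : Fin N // m ≠ j}, |⟪x m.1, q⟫| ≤ |⟪x selF.1, q⟫| :=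
    ompSelect_max _ q
  have hmaxR : ∀ m : {m : Fin N // x m ∈ S i ∧ m ≠ j}, |⟪x m.1, q⟫| ≤ |⟪x selR.1, q⟫| :=
    ompSelect_max _ q
  apply le_antisymm
  · -- selF ≤ e selR
    apply ompSelect_le_of
    intro m
    show |⟪x m.1, q⟫| ≤ |⟪x selR.1, q⟫|
    by_cases hx : x m.1 ∈ S i
    · exact hmaxR ⟨m.1, hx, m.2⟩
    · exact le_trans (hcross m.1 hx).le (hmaxR m0)
  · -- e selR ≤ selF
    have hxSel : x selF.1 ∈ S i := by
      by_contra hx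
      have hc1 := hcross selF.1 hx
      have hc2 := hmaxF ⟨m0.1, m0.2.2⟩
      simp only at hc2
      linarith
    have h5 : selR ≤ ⟨selF.1, hxSel, selF.2⟩ := by
      apply ompSelect_le_of
      intro m
      show |⟪x m.1, q⟫| ≤ |⟪x selF.1, q⟫|
      exact hmaxF ⟨m.1, m.2.2⟩
    exact Subtype.mk_le_mk.mpr h5

lemma ompState_succ_of_zero {ι : Type*} [Fintype ι] [LinearOrder ι]
    (a : ι → EuclideanSpace ℝ (Fin D)) (b : EuclideanSpace ℝ (Fin D)) (k : ℕ)
    (hz : (ompState a b k).2 = 0) : ompState a b (k+1) = ompState a b k := by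
  rw [ompState]
  simp [hz]

lemma ompState_succ_spec {ι : Type*} [Fintype ι] [LinearOrder ι]
    (a : ι → EuclideanSpace ℝ (Fin D)) (b : EuclideanSpace ℝ (Fin D)) (k : ℕ)
    (hz : (ompState a b k).2 ≠ 0) [hne : Nonempty ι] :
    (ompState a b (k+1)).1 = insert (ompSelect a (ompState a b k).2) (ompState a b k).1
    ∧ (ompState a b (k+1)).2 = b - (Submodule.orthogonalProjection
        (Submodule.span ℝ (a '' (((ompState a b (k+1)).1 : Finset ι) : Set ι))) b :
        EuclideanSpace ℝ (Fin D)) := by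
  have h : ompState a b (k+1)
      = (insert (ompSelect a (ompState a b k).2) (ompState a b k).1,
         b - (Submodule.orthogonalProjection (Submodule.span ℝ (a ''
           ((insert (ompSelect a (ompState a b k).2) (ompState a b k).1 : Finset ι) :
             Set ι))) b : EuclideanSpace ℝ (Fin D))) := by
    rw [ompState]
    simp only [if_neg hz, dif_pos hne]
  refine ⟨by rw [h], ?_⟩
  rw [h]

lemma state_eq {n N : ℕ} (S : Fin n → Submodule ℝ (EuclideanSpace ℝ (Fin D)))
    (x : Fin N → EuclideanSpace ℝ (Fin D)) (i : Fin n) (j : Fin N)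
    (hunit : ∀ j, ‖x j‖ = 1) (hmem : ∀ j, ∃ i, x j ∈ S i)
    (hspan : Submodule.span ℝ (subXmin S x i j) = S i)
    (hij : x j ∈ S i)
    (hcond : sSup {r : ℝ | ∃ k, k ≠ i ∧ r = coherence (Wfull S x i) (subX S x k)}
      < rMin S x i) (k : ℕ) :
    (ompState (fun m : {m : Fin N // m ≠ j} => x m.1) (x j) k).1
      = (ompState (fun m : {m : Fin N // x m ∈ S i ∧ m ≠ j} => x m.1) (x j) k).1.image
          (fun m => (⟨m.1, m.2.2⟩ : {m : Fin N // m ≠ j}))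
    ∧ (ompState (fun m : {m : Fin N // m ≠ j} => x m.1) (x j) k).2
      = (ompState (fun m : {m : Fin N // x m ∈ S i ∧ m ≠ j} => x m.1) (x j) k).2
    ∧ (ompState (fun m : {m : Fin N // x m ∈ S i ∧ m ≠ j} => x m.1) (x j) k).2 ∈ S i := by
  haveI hNR : Nonempty {m : Fin N // x m ∈ S i ∧ m ≠ j} :=
    nonempty_restricted S x i j hunit hspan hij
  haveI hNF : Nonempty {m : Fin N // m ≠ j} := ⟨⟨hNR.some.1, hNR.some.2.2⟩⟩
  set e : {m : Fin N // x m ∈ S i ∧ m ≠ j} → {m : Fin N // m ≠ j} :=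
    fun m => ⟨m.1, m.2.2⟩ with he
  set aF : {m : Fin N // m ≠ j} → EuclideanSpace ℝ (Fin D) := fun m => x m.1 with haF
  set aR : {m : Fin N // x m ∈ S i ∧ m ≠ j} → EuclideanSpace ℝ (Fin D) :=
    fun m => x m.1 with haR
  induction k with
  | zero => exact ⟨by simp [ompState], rfl, hij⟩
  | succ k ih =>
    obtain ⟨ih1, ih2, ih3⟩ := ih
    by_cases hz : (ompState aR (x j) k).2 = 0
    · have hzF : (ompState aF (x j) k).2 = 0 := by rw [ih2]; exact hz
      rw [ompState_succ_of_zero aF (x j) k hzF, ompState_succ_of_zero aR (x j) k hz]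
      exact ⟨ih1, ih2, ih3⟩
    · have hzF : ¬ (ompState aF (x j) k).2 = 0 := by rw [ih2]; exact hz
      have hqS : (ompState aR (x j) k).2 ∈ S i := ih3
      have hw : ‖(ompState aR (x j) k).2‖⁻¹ • (ompState aR (x j) k).2 ∈ Wfull S x i :=
        Set.mem_biUnion hij ⟨k, hz, rfl⟩
      have hsel : ompSelect aF (ompState aR (x j) k).2
          = e (ompSelect aR (ompState aR (x j) k).2) :=
        select_eq S x i j hunit hmem hspan hij hcond hqS hz hw
      obtain ⟨eF1, eF2⟩ := ompState_succ_spec aF (x j) k hzF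
      obtain ⟨eR1, eR2⟩ := ompState_succ_spec aR (x j) k hz
      have h1 : (ompState aF (x j) (k+1)).1
          = (ompState aR (x j) (k+1)).1.image e := by
        rw [eF1, eR1]
        apply Finset.coe_injective
        simp only [Finset.coe_image, Finset.coe_insert, Set.image_insert_eq, ih2, hsel, ih1]
      have hIm : aF '' ((((ompState aR (x j) (k+1)).1.image e : Finset _)) : Set _)
          = aR '' (((ompState aR (x j) (k+1)).1 : Finset _) : Set _) := by
        rw [Finset.coe_image, ← Set.image_comp]
        rfl
      have hKle : Submodule.span ℝ
          (aR '' (((ompState aR (x j) (k+1)).1 : Finset _) : Set _)) ≤ S i := by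
        rw [Submodule.span_le]
        rintro y ⟨m, -, rfl⟩
        exact m.2.1
      refine ⟨h1, ?_, ?_⟩
      · rw [eF2, eR2, h1, hIm]
      · rw [eR2]
        exact Submodule.sub_mem _ hij (hKle (SetLike.coe_mem _))

/-- **Theorem 2.** If for every `i` one has `max_{k ≠ i} μ(W^i, X^k) < r_i`,
then for every data point the representation produced by OMP (with `ε = 0` and
`k_max = N − 1`) is subspace preserving. -/
theorem sscOmp_coherenceResidual_lt_inradius_subspacePreserving
    {D n N : ℕ} (S : Fin n → Submodule ℝ (EuclideanSpace ℝ (Fin D)))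
    (x : Fin N → EuclideanSpace ℝ (Fin D))
    (hunit : ∀ j, ‖x j‖ = 1)
    (hmem : ∀ j, ∃ i, x j ∈ S i)
    (hrank : ∀ i, ∀ j, x j ∈ S i → Submodule.span ℝ (subXmin S x i j) = S i)
    (hcond : ∀ i : Fin n,
      sSup {r : ℝ | ∃ k, k ≠ i ∧ r = coherence (Wfull S x i) (subX S x k)} < rMin S x i) :
    ∀ (j : Fin N) (i : Fin n), x j ∈ S i →
      ∀ c : {m : Fin N // m ≠ j} → ℝ,
        IsOMPOutput (fun m => x m.1) (x j) (N - 1) c →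
        ∀ m, c m ≠ 0 → x m.1 ∈ S i := by
  intro j i hij c hc m hm
  have hsupp := hc.1 m hm
  unfold ompSupport at hsupp
  rw [(state_eq S x i j hunit hmem (hrank i j hij) hij (hcond i) (N-1)).1] at hsupp
  obtain ⟨m', -, rfl⟩ := Finset.mem_image.mp hsupp
  exact m'.2.1

end SSCOMP
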